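/- Let F be a field, k ≥ 2, m ≥ 1, and let L(λ) = λX + Y with X, Y ∈ F^{km×km} be a pencil that is block-symmetric (L(λ)^B = L(λ) with respect to the k×k partition into m×m blocks) and satisfies L(λ)·(Φ_k(λ)⊗I_m) = 0. Then X = 0 and Y = 0, i.e., L(λ) = 0. (Equivalently: the only pencil in DM(P) with ansatz vector 0 is the zero pencil.) -/
import Mathlib

open Matrix

section Aux

open Polynomial

theorem phi_deg {F : Type*} [Field F] (α β γ : ℕ → F) (hα : ∀ j, α j ≠ 0)
    (φ : ℕ → Polynomial F) (hφ0 : φ 0 = 1)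
    (hrec : ∀ j : ℕ, C (α j) * φ (j + 1)
      = (X - C (β j)) * φ j - C (γ j) * (if j = 0 then 0 else φ (j - 1))) :
    ∀ j, (φ j).natDegree = j ∧ φ j ≠ 0 := by
  intro j
  induction j using Nat.strong_induction_on with
  | _ j ih =>
    match j with
    | 0 => simp [hφ0]
    | (j+1) =>
      obtain ⟨hd, hne⟩ := ih j (by omega)
      have hXC : (X - C (β j)) ≠ 0 := X_sub_C_ne_zero _
      have h1 : ((X - C (β j)) * φ j).natDegree = j + 1 := by
        rw [natDegree_mul hXC hne, natDegree_X_sub_C, hd, add_comm]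
      have h2 : (C (γ j) * (if j = 0 then 0 else φ (j - 1))).natDegree < j + 1 := by
        rcases Nat.eq_zero_or_pos j with h | h
        · simp [h]
        · have hj := ih (j-1) (by omega)
          calc (C (γ j) * (if j = 0 then 0 else φ (j - 1))).natDegree
              ≤ (if j = 0 then (0:F[X]) else φ (j - 1)).natDegree := natDegree_C_mul_le _ _
            _ < j + 1 := by rw [if_neg (by omega), hj.1]; omega
      have h3 : ((X - C (β j)) * φ j - C (γ j) * (if j = 0 then 0 else φ (j - 1))).natDegree
          = j + 1 := by rw [natDegree_sub_eq_left_of_natDegree_lt (h1 ▸ h2), h1]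
      have h4 : C (α j) * φ (j+1) ≠ 0 := by
        rw [hrec j]
        intro h
        rw [h] at h3; simp at h3
      have h5 : φ (j+1) ≠ 0 := fun h => h4 (by rw [h, mul_zero])
      refine ⟨?_, h5⟩
      have := natDegree_C_mul (p := φ (j+1)) (hα j)
      rw [hrec j, h3] at this
      omega

theorem phi_indep {F : Type*} [Field F] (φ : ℕ → Polynomial F)
    (hφ : ∀ j, (φ j).natDegree = j ∧ φ j ≠ 0) :
    ∀ (n : ℕ) (c : ℕ → F), (∑ b ∈ Finset.range n, C (c b) * φ b) = 0 →
      ∀ b < n, c b = 0 := by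
  intro n
  induction n with
  | zero => intro c _ b hb; omega
  | succ n ih =>
    intro c hc b hb
    rw [Finset.sum_range_succ] at hc
    have hcn : c n = 0 := by
      have h0 := congrArg (fun p => Polynomial.coeff p n) hc
      simp only [coeff_add, coeff_zero, finset_sum_coeff, coeff_C_mul] at h0
      have hz : ∀ b ∈ Finset.range n, c b * (φ b).coeff n = 0 := by
        intro b hb
        rw [coeff_eq_zero_of_natDegree_lt (by rw [(hφ b).1]; exact Finset.mem_range.mp hb),
          mul_zero]
      rw [Finset.sum_eq_zero hz, zero_add] at h0
      have hlc : (φ n).coeff n ≠ 0 := by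
        rw [show (φ n).coeff n = (φ n).leadingCoeff by rw [leadingCoeff, (hφ n).1]]
        exact mt leadingCoeff_eq_zero.mp (hφ n).2
      exact (mul_eq_zero.mp h0).resolve_right hlc
    rcases Nat.lt_succ_iff_lt_or_eq.mp hb with h | h
    · exact ih c (by rwa [hcn, map_zero, zero_mul, add_zero] at hc) b h
    · rw [h]; exact hcn

theorem phi_expand {F : Type*} [Field F] (α β γ : ℕ → F)
    (φ : ℕ → Polynomial F)
    (hφ : ∀ j, (φ j).natDegree = j ∧ φ j ≠ 0)
    (hrec : ∀ j : ℕ, C (α j) * φ (j + 1)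
      = (X - C (β j)) * φ j - C (γ j) * (if j = 0 then 0 else φ (j - 1)))
    (k : ℕ) (x y : ℕ → F)
    (hx : ∀ n, k ≤ n → x n = 0) (hy : ∀ n, k ≤ n → y n = 0)
    (h : (∑ n ∈ Finset.range k, (X * C (x n) + C (y n)) * φ n) = 0) :
    ∀ c ≤ k, (if c = 0 then 0 else α (c-1) * x (c-1)) + β c * x c
        + γ (c+1) * x (c+1) + y c = 0 := by
  set ψ : ℕ → Polynomial F := fun n => if n = 0 then 0 else φ (n-1) with hψ
  have hXφ : ∀ n, X * φ n = C (α n) * φ (n+1) + C (β n) * φ n + C (γ n) * ψ n := by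
    intro n; have := hrec n; simp only [hψ]; linear_combination -this
  have hterm : ∀ n, (X * C (x n) + C (y n)) * φ n
      = C (α n * x n) * φ (n+1) + C (β n * x n) * φ n + C (γ n * x n) * ψ n
        + C (y n) * φ n := by
    intro n
    have := hXφ n
    simp only [_root_.map_mul]
    linear_combination C (x n) * this
  rw [Finset.sum_congr rfl (fun n _ => hterm n)] at h
  simp only [Finset.sum_add_distrib] at h
  have hA : (∑ n ∈ Finset.range k, C (α n * x n) * φ (n+1))
      = ∑ c ∈ Finset.range (k+1),
          C (if c = 0 then 0 else α (c-1) * x (c-1)) * φ c := by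
    rw [Finset.sum_range_succ' (fun c => C (if c = 0 then 0 else α (c-1) * x (c-1)) * φ c) k]
    simp
  have hB : (∑ n ∈ Finset.range k, C (β n * x n) * φ n)
      = ∑ c ∈ Finset.range (k+1), C (β c * x c) * φ c := by
    rw [Finset.sum_range_succ, hx k le_rfl]
    simp
  have hD : (∑ n ∈ Finset.range k, C (y n) * φ n)
      = ∑ c ∈ Finset.range (k+1), C (if c < k then y c else 0) * φ c := by
    rw [Finset.sum_range_succ, if_neg (lt_irrefl k)]
    simp only [map_zero, zero_mul, add_zero]
    exact Finset.sum_congr rfl fun n hn => by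
      rw [if_pos (Finset.mem_range.mp hn)]
  have hG : (∑ n ∈ Finset.range k, C (γ n * x n) * ψ n)
      = ∑ c ∈ Finset.range (k+1), C (γ (c+1) * x (c+1)) * φ c := by
    have e1 : (∑ n ∈ Finset.range k, C (γ n * x n) * ψ n)
        = ∑ n ∈ Finset.range (k+1), C (γ n * x n) * ψ n := by
      rw [Finset.sum_range_succ, hx k le_rfl]; simp
    have e2 : ψ 0 = 0 := by simp [hψ]
    have e3 : ∀ n, ψ (n+1) = φ n := by intro n; simp [hψ]
    rw [Finset.sum_range_succ (fun c => C (γ (c+1) * x (c+1)) * φ c) k]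
    rw [e1, Finset.sum_range_succ' (fun n => C (γ n * x n) * ψ n) k]
    simp only [e3, e2, mul_zero, add_zero]
    rw [hx (k+1) (by omega)]
    simp
  rw [hA, hB, hG, hD, ← Finset.sum_add_distrib, ← Finset.sum_add_distrib,
    ← Finset.sum_add_distrib] at h
  have h' : (∑ c ∈ Finset.range (k+1),
      C ((if c = 0 then 0 else α (c-1) * x (c-1)) + β c * x c + γ (c+1) * x (c+1)
        + (if c < k then y c else 0)) * φ c) = 0 := by
    rw [← h]
    exact Finset.sum_congr rfl fun c _ => by simp only [map_add]; ring
  intro c hc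
  have h2 := phi_indep φ hφ (k+1) _ h' c (by omega)
  have h3 : (if c < k then y c else 0) = y c := by
    rcases lt_or_ge c k with h1 | h1
    · rw [if_pos h1]
    · rw [if_neg (by omega), hy c h1]
  rwa [h3] at h2

theorem key_lemma {F : Type*} [Field F] (k : ℕ) (α β γ : ℕ → F) (hα : ∀ j, α j ≠ 0)
    (x y : ℕ → ℕ → F)
    (hx0 : ∀ a b, k ≤ b → x a b = 0) (hy0 : ∀ a b, k ≤ b → y a b = 0)
    (hxs : ∀ a b, x a b = x b a) (hys : ∀ a b, y a b = y b a)
    (hrel : ∀ a, a < k → ∀ c, c ≤ k →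
      (if c = 0 then 0 else α (c-1) * x a (c-1)) + β c * x a c
        + γ (c+1) * x a (c+1) + y a c = 0) :
    ∀ a b, x a b = 0 ∧ y a b = 0 := by
  have main : ∀ t a b, k - t ≤ b → x a b = 0 ∧ y a b = 0 := by
    intro t
    induction t with
    | zero => intro a b hb; rw [Nat.sub_zero] at hb; exact ⟨hx0 a b hb, hy0 a b hb⟩
    | succ t ih =>
      intro a b hb
      rcases le_or_gt (k - t) b with h | h
      · exact ih a b h
      · have hbv : b = k - t - 1 := by omega
        have htk : t < k := by omega
        have hbk : b < k := by omega
        have hxab : ∀ a', x a' b = 0 := by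
          intro a'
          rcases lt_or_ge a' k with ha | ha
          · have hr := hrel a' ha (b+1) (by omega)
            have e1 : x a' (b+1) = 0 := (ih a' (b+1) (by omega)).1
            have e2 : x a' (b+1+1) = 0 := (ih a' (b+1+1) (by omega)).1
            have e3 : y a' (b+1) = 0 := (ih a' (b+1) (by omega)).2
            rw [if_neg (by omega), Nat.add_sub_cancel, e1, e2, e3, mul_zero, mul_zero,
              add_zero, add_zero, add_zero] at hr
            exact (mul_eq_zero.mp hr).resolve_left (hα b)
          · rw [hxs]; exact hx0 b a' ha
        refine ⟨hxab a, ?_⟩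
        rcases lt_or_ge a k with ha | ha
        · rw [hys]
          have hr := hrel b hbk a (by omega)
          have f1 : x b a = 0 := by rw [hxs]; exact hxab a
          have f2 : x b (a+1) = 0 := by rw [hxs]; exact hxab (a+1)
          have f3 : x b (a-1) = 0 := by rw [hxs]; exact hxab (a-1)
          rw [f1, f2, f3] at hr
          rcases Nat.eq_zero_or_pos a with h0 | h0
          · rw [if_pos h0] at hr; simpa using hr
          · rw [if_neg (by omega)] at hr; simpa using hr
        · rw [hys]; exact hy0 b a ha
  intro a b
  exact main k a b (by omega)

theorem pencil_entry_eq {F : Type*} [Field F] {a b a' b' : F}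
    (h : X * C a + C b = X * C a' + C b') : a = a' ∧ b = b' := by
  constructor
  · have := congrArg (fun p => Polynomial.coeff p 1) h
    simpa [coeff_X_mul] using this
  · have := congrArg (fun p => Polynomial.coeff p 0) h
    simpa [Polynomial.mul_coeff_zero] using this

end Aux

/-- The column vector `Φ_k(λ) ⊗ I_m` as a `km × m` polynomial matrix. -/
noncomputable def phiKron {F : Type*} [Field F] (φ : ℕ → Polynomial F) (k m : ℕ) :
    Matrix (Fin k × Fin m) (Fin m) (Polynomial F) :=
  Matrix.of fun p j => if p.2 = j then φ (k - 1 - (p.1 : ℕ)) else 0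

/-- A block-symmetric pencil `L(λ) = λX + Y ∈ F[λ]^{km×km}` with
`L(λ)(Φ_k(λ)⊗I_m) = 0` is zero: `X = 0` and `Y = 0`.  (The only pencil in `𝔻𝕄(P)` with
ansatz vector `0` is the zero pencil.) -/
theorem blockSymmetric_pencil_ansatz_zero
    {F : Type*} [Field F] {m k : ℕ} (hk : 2 ≤ k) (hm : 1 ≤ m)
    (α β γ : ℕ → F) (hα : ∀ j, α j ≠ 0)
    (φ : ℕ → Polynomial F) (hφ0 : φ 0 = 1)
    (hrec : ∀ j : ℕ, Polynomial.C (α j) * φ (j + 1)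
      = (Polynomial.X - Polynomial.C (β j)) * φ j
        - Polynomial.C (γ j) * (if j = 0 then 0 else φ (j - 1)))
    (X Y : Matrix (Fin k × Fin m) (Fin k × Fin m) F)
    (L : Matrix (Fin k × Fin m) (Fin k × Fin m) (Polynomial F))
    (hL : L = Matrix.of fun p q => Polynomial.X * Polynomial.C (X p q) + Polynomial.C (Y p q))
    (hblocksym : ∀ (i j : Fin k) (r s : Fin m), L (i, r) (j, s) = L (j, r) (i, s))
    (hansatz : L * phiKron φ k m = 0) :
    X = 0 ∧ Y = 0 := by
  have hφd := phi_deg α β γ hα φ hφ0 hrec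
  have hXsym : ∀ (i j : Fin k) (r s : Fin m), X (i, r) (j, s) = X (j, r) (i, s) := by
    intro i j r s
    have h := hblocksym i j r s
    rw [hL] at h
    simp only [Matrix.of_apply] at h
    exact (pencil_entry_eq h).1
  have hYsym : ∀ (i j : Fin k) (r s : Fin m), Y (i, r) (j, s) = Y (j, r) (i, s) := by
    intro i j r s
    have h := hblocksym i j r s
    rw [hL] at h
    simp only [Matrix.of_apply] at h
    exact (pencil_entry_eq h).2
  have hrow : ∀ (p : Fin k × Fin m) (s : Fin m),
      (∑ j : Fin k, L p (j, s) * φ (k - 1 - (j : ℕ))) = 0 := by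
    intro p s
    have h := congrFun (congrFun hansatz p) s
    rw [Matrix.mul_apply] at h
    simp only [phiKron, Matrix.of_apply, Fintype.sum_prod_type, mul_ite, mul_zero,
      Matrix.zero_apply] at h
    rw [← h]
    refine Finset.sum_congr rfl fun j _ => ?_
    rw [Finset.sum_ite_eq' Finset.univ s (fun t => L p (j, t) * φ (k - 1 - (j:ℕ)))]
    simp
  have main : ∀ (r s : Fin m) (i j : Fin k), X (i, r) (j, s) = 0 ∧ Y (i, r) (j, s) = 0 := by
    intro r s
    set x' : ℕ → ℕ → F := fun a b =>
      if h : a < k ∧ b < k then X (⟨k-1-a, by omega⟩, r) (⟨k-1-b, by omega⟩, s) else 0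
      with hx'def
    set y' : ℕ → ℕ → F := fun a b =>
      if h : a < k ∧ b < k then Y (⟨k-1-a, by omega⟩, r) (⟨k-1-b, by omega⟩, s) else 0
      with hy'def
    have hx'eq : ∀ a b, x' a b =
        if h : a < k ∧ b < k then X (⟨k-1-a, by omega⟩, r) (⟨k-1-b, by omega⟩, s) else 0 :=
      fun _ _ => rfl
    have hy'eq : ∀ a b, y' a b =
        if h : a < k ∧ b < k then Y (⟨k-1-a, by omega⟩, r) (⟨k-1-b, by omega⟩, s) else 0 :=
      fun _ _ => rfl
    have hx0 : ∀ a b, k ≤ b → x' a b = 0 := by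
      intro a b hb; rw [hx'eq, dif_neg (by omega)]
    have hy0 : ∀ a b, k ≤ b → y' a b = 0 := by
      intro a b hb; rw [hy'eq, dif_neg (by omega)]
    have hxs : ∀ a b, x' a b = x' b a := by
      intro a b
      by_cases h : a < k ∧ b < k
      · rw [hx'eq, hx'eq, dif_pos h, dif_pos ⟨h.2, h.1⟩]
        exact hXsym _ _ _ _
      · rw [hx'eq, hx'eq, dif_neg h, dif_neg (fun hh => h ⟨hh.2, hh.1⟩)]
    have hys : ∀ a b, y' a b = y' b a := by
      intro a b
      by_cases h : a < k ∧ b < k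
      · rw [hy'eq, hy'eq, dif_pos h, dif_pos ⟨h.2, h.1⟩]
        exact hYsym _ _ _ _
      · rw [hy'eq, hy'eq, dif_neg h, dif_neg (fun hh => h ⟨hh.2, hh.1⟩)]
    have hrel : ∀ a, a < k → ∀ c, c ≤ k →
        (if c = 0 then 0 else α (c-1) * x' a (c-1)) + β c * x' a c
          + γ (c+1) * x' a (c+1) + y' a c = 0 := by
      intro a ha
      have hXe : ∀ j : Fin k, x' a (k - 1 - (j : ℕ)) = X (⟨k-1-a, by omega⟩, r) (j, s) := by
        intro j
        rw [hx'eq, dif_pos ⟨ha, by omega⟩]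
        have hjk := j.isLt
        have hj : (⟨k-1-(k-1-(j:ℕ)), by omega⟩ : Fin k) = j :=
          Fin.ext (show k-1-(k-1-(j:ℕ)) = (j:ℕ) by omega)
        rw [hj]
      have hYe : ∀ j : Fin k, y' a (k - 1 - (j : ℕ)) = Y (⟨k-1-a, by omega⟩, r) (j, s) := by
        intro j
        rw [hy'eq, dif_pos ⟨ha, by omega⟩]
        have hjk := j.isLt
        have hj : (⟨k-1-(k-1-(j:ℕ)), by omega⟩ : Fin k) = j :=
          Fin.ext (show k-1-(k-1-(j:ℕ)) = (j:ℕ) by omega)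
        rw [hj]
      have hsum : (∑ n ∈ Finset.range k,
          (Polynomial.X * Polynomial.C (x' a n) + Polynomial.C (y' a n)) * φ n) = 0 := by
        rw [← Finset.sum_range_reflect]
        rw [← Fin.sum_univ_eq_sum_range (fun n =>
          (Polynomial.X * Polynomial.C (x' a (k-1-n)) + Polynomial.C (y' a (k-1-n)))
            * φ (k-1-n)) k]
        refine Eq.trans (Finset.sum_congr rfl ?_) (hrow (⟨k-1-a, by omega⟩, r) s)
        intro j _
        rw [hXe j, hYe j, hL]
        simp only [Matrix.of_apply]
      exact phi_expand α β γ φ hφd hrec k (x' a) (y' a)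
        (fun n hn => hx0 a n hn) (fun n hn => hy0 a n hn) hsum
    have hall := key_lemma k α β γ hα x' y' hx0 hy0 hxs hys hrel
    intro i j
    have hik := i.isLt
    have hjk := j.isLt
    have h5 := hall (k-1-(i:ℕ)) (k-1-(j:ℕ))
    have eX : x' (k-1-(i:ℕ)) (k-1-(j:ℕ)) = X (i, r) (j, s) := by
      rw [hx'eq, dif_pos ⟨by omega, by omega⟩]
      have h1 : (⟨k-1-(k-1-(i:ℕ)), by omega⟩ : Fin k) = i :=
        Fin.ext (show k-1-(k-1-(i:ℕ)) = (i:ℕ) by omega)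
      have h2 : (⟨k-1-(k-1-(j:ℕ)), by omega⟩ : Fin k) = j :=
        Fin.ext (show k-1-(k-1-(j:ℕ)) = (j:ℕ) by omega)
      rw [h1, h2]
    have eY : y' (k-1-(i:ℕ)) (k-1-(j:ℕ)) = Y (i, r) (j, s) := by
      rw [hy'eq, dif_pos ⟨by omega, by omega⟩]
      have h1 : (⟨k-1-(k-1-(i:ℕ)), by omega⟩ : Fin k) = i :=
        Fin.ext (show k-1-(k-1-(i:ℕ)) = (i:ℕ) by omega)
      have h2 : (⟨k-1-(k-1-(j:ℕ)), by omega⟩ : Fin k) = j :=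
        Fin.ext (show k-1-(k-1-(j:ℕ)) = (j:ℕ) by omega)
      rw [h1, h2]
    exact ⟨eX ▸ h5.1, eY ▸ h5.2⟩
  constructor
  · ext ⟨i, r⟩ ⟨j, s⟩
    simp only [Matrix.zero_apply]
    exact (main r s i j).1
  · ext ⟨i, r⟩ ⟨j, s⟩
    simp only [Matrix.zero_apply]
    exact (main r s i j).2
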